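/- In the rank-3 alternating matroid on elements x₀,…,x_{p−1} (with χ(x_i,x_j,x_k) = + for i < j < k), extended simply by an element e, let V_i (i = 0,…,p−1, indices mod p) be the cocircuit with V_i(x_i) = V_i(x_{i+1}) = 0 and V_i(x) = + for all other x among the x_j. Then the cyclic sign sequence V₀(e), V₁(e), …, V_{p−1}(e) has at most one maximal block of +'s and at most one maximal block of −'s (possibly separated by single zeros); i.e., it is of one of the forms +⋯+−⋯−+⋯+, +⋯+0−⋯−+⋯+, +⋯+−⋯−0+⋯+, +⋯+0−⋯−0+⋯+, or the negations of these. -/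

import Mathlib

/-- Chirotope axioms (B1)-(B3) for a map `χ : E^r → {−1,0,1}` (values in ℤ). -/
def IsChirotope {E : Type*} {r : ℕ} (χ : (Fin r → E) → ℤ) : Prop :=
  (∀ t, χ t = 1 ∨ χ t = 0 ∨ χ t = -1) ∧
  (∃ t, χ t ≠ 0) ∧
  (∀ (t : Fin r → E) (τ : Equiv.Perm (Fin r)), χ (t ∘ ⇑τ) = ((Equiv.Perm.sign τ : ℤˣ) : ℤ) * χ t) ∧
  (∀ (i₀ : Fin r) (x y : Fin r → E),
    (∀ s : Fin r, 0 ≤ χ (Function.update x i₀ (y s)) * χ (Function.update y s (x i₀))) →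
    0 ≤ χ x * χ y)

/-- Cocircuits of the oriented matroid with chirotope `χ`: the nonzero sign vectors of the
form `x ↦ χ(t₁,…,x,…,t_r)`. -/
def IsCocircuit {E : Type*} {r : ℕ} (χ : (Fin r → E) → ℤ) (c : E → ℤ) : Prop :=
  c ≠ 0 ∧ ∃ (i : Fin r) (t : Fin r → E), c = fun x => χ (Function.update t i x)

/-- Circuits of the oriented matroid with chirotope `χ`. -/
def IsCircuit {E : Type*} {r : ℕ} (χ : (Fin r → E) → ℤ) (c : E → ℤ) : Prop :=
  c ≠ 0 ∧ ∃ t : Fin (r + 1) → E,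
    (∀ i, c (t i) = (-1) ^ (i : ℕ) * χ (fun j => t (i.succAbove j))) ∧
    (∀ x, (∀ i, t i ≠ x) → c x = 0)

/-- Closure of a set of sign vectors under composition `X ∘ Y`. -/
inductive SignComp {E : Type*} (B : (E → ℤ) → Prop) : (E → ℤ) → Prop
  | zero : SignComp B 0
  | base (c : E → ℤ) : B c → SignComp B c
  | comp (X Y : E → ℤ) : SignComp B X → SignComp B Y →
      SignComp B (fun e => if X e = 0 then Y e else X e)

/-- Covectors: compositions of cocircuits. -/
def IsCovector {E : Type*} {r : ℕ} (χ : (Fin r → E) → ℤ) : (E → ℤ) → Prop :=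
  SignComp (IsCocircuit χ)

/-- Vectors: compositions of circuits. -/
def IsVector {E : Type*} {r : ℕ} (χ : (Fin r → E) → ℤ) : (E → ℤ) → Prop :=
  SignComp (IsCircuit χ)

/-- No loops: every element lies in some basis. -/
def OMLoopless {E : Type*} {r : ℕ} (χ : (Fin r → E) → ℤ) : Prop :=
  ∀ e : E, ∃ t, χ t ≠ 0 ∧ ∃ i, t i = e

/-- Simplicity: no loops and no two distinct parallel or antiparallel elements. -/
def OMSimple {E : Type*} {r : ℕ} (χ : (Fin r → E) → ℤ) : Prop :=
  OMLoopless χ ∧ ∀ e f : E, e ≠ f → ∃ t, χ t ≠ 0 ∧ ∃ i j, i ≠ j ∧ t i = e ∧ t j = f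

/-- Acyclicity: existence of the all-positive covector. -/
def OMAcyclic {E : Type*} {r : ℕ} (χ : (Fin r → E) → ℤ) : Prop :=
  ∃ X, IsCovector χ X ∧ ∀ e, X e = 1

/-- Extreme point of an acyclic oriented matroid. -/
def IsExtremePoint {E : Type*} {r : ℕ} (χ : (Fin r → E) → ℤ) (e : E) : Prop :=
  ∃ c, IsCocircuit χ c ∧ c e = 0 ∧ ∀ f, f ≠ e → c f = 1

/-- Rotational symmetry of the oriented matroid with chirotope `χ`. -/
def IsRotSym {E : Type*} {r : ℕ} (χ : (Fin r → E) → ℤ) (σ : Equiv.Perm E) : Prop :=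
  ∀ t, χ (⇑σ ∘ t) = χ t

/-- A sign sequence on `{0,…,p−1}` of the form `+⋯+−⋯−+⋯+` with the `−`-block possibly
flanked by single zeros (all blocks possibly empty). -/
def BlockPattern (s : ℕ → ℤ) (p : ℕ) : Prop :=
  ∃ a b : ℕ, a ≤ b ∧ b ≤ p ∧ ∀ k < p,
    (k < a → s k = 1) ∧
    (a ≤ k → k ≤ b → (s k = -1 ∨ (s k = 0 ∧ (k = a ∨ k = b)))) ∧
    (b < k → s k = 1)

set_option linter.unusedSectionVars false
set_option linter.unusedVariables false
set_option maxHeartbeats 1000000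

section AuxLemmas

open Fin.CommRing

variable {E : Type*}

lemma vec3_eta (f : Fin 3 → E) : f = ![f 0, f 1, f 2] := by
  funext i; fin_cases i <;> simp

lemma upd0 (a b c y : E) : Function.update ![a,b,c] (0 : Fin 3) y = ![y,b,c] := by
  funext i; fin_cases i <;> simp [Function.update]

lemma upd1 (a b c y : E) : Function.update ![a,b,c] (1 : Fin 3) y = ![a,y,c] := by
  funext i; fin_cases i <;> simp [Function.update]

lemma upd2 (a b c y : E) : Function.update ![a,b,c] (2 : Fin 3) y = ![a,b,y] := by
  funext i; fin_cases i <;> simp [Function.update]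

section chi
variable {χ : (Fin 3 → E) → ℤ} (hχ : IsChirotope χ)

include hχ

lemma chi_swap01 (a b c : E) : χ ![b,a,c] = - χ ![a,b,c] := by
  have h := hχ.2.2.1 ![a,b,c] (Equiv.swap 0 1)
  have e1 : (![a,b,c] ∘ ⇑(Equiv.swap (0:Fin 3) 1)) = ![b,a,c] := by
    funext i; fin_cases i <;> simp [Equiv.swap_apply_of_ne_of_ne]
  rw [e1] at h
  rw [h, Equiv.Perm.sign_swap (by decide)]
  simp

lemma chi_swap12 (a b c : E) : χ ![a,c,b] = - χ ![a,b,c] := by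
  have h := hχ.2.2.1 ![a,b,c] (Equiv.swap 1 2)
  have e1 : (![a,b,c] ∘ ⇑(Equiv.swap (1:Fin 3) 2)) = ![a,c,b] := by
    funext i; fin_cases i <;> simp [Equiv.swap_apply_of_ne_of_ne]
  rw [e1] at h
  rw [h, Equiv.Perm.sign_swap (by decide)]
  simp

lemma chi_swap02 (a b c : E) : χ ![c,b,a] = - χ ![a,b,c] := by
  have h := hχ.2.2.1 ![a,b,c] (Equiv.swap 0 2)
  have e1 : (![a,b,c] ∘ ⇑(Equiv.swap (0:Fin 3) 2)) = ![c,b,a] := by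
    funext i; fin_cases i <;> simp [Equiv.swap_apply_of_ne_of_ne]
  rw [e1] at h
  rw [h, Equiv.Perm.sign_swap (by decide)]
  simp

lemma chi_cyc (a b c : E) : χ ![c,a,b] = χ ![a,b,c] := by
  have h1 : χ ![a,c,b] = - χ ![c,a,b] := chi_swap01 hχ c a b
  have h2 : χ ![a,c,b] = - χ ![a,b,c] := chi_swap12 hχ a b c
  omega

lemma chi_dup01 (a c : E) : χ ![a,a,c] = 0 := by
  have := chi_swap01 hχ a a c; omega

lemma chi_dup12 (a b : E) : χ ![a,b,b] = 0 := by
  have := chi_swap12 hχ a b b; omega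

lemma chi_dup02 (a b : E) : χ ![a,b,a] = 0 := by
  have := chi_swap02 hχ a b a; omega

/-- B3 specialized to rank 3, slot 2. -/
lemma chi_b3 (a b c d f g : E)
    (h0 : 0 ≤ χ ![a,b,d] * χ ![c,f,g])
    (h1 : 0 ≤ χ ![a,b,f] * χ ![d,c,g])
    (h2 : 0 ≤ χ ![a,b,g] * χ ![d,f,c]) :
    0 ≤ χ ![a,b,c] * χ ![d,f,g] := by
  apply hχ.2.2.2 (2 : Fin 3) ![a,b,c] ![d,f,g]
  intro s
  fin_cases s
  · simpa [upd2, upd0] using h0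
  · simpa [upd2, upd1] using h1
  · simpa [upd2] using h2

lemma chi_zero3 (a b u v w : E)
    (hu : χ ![a,b,u] = 0) (hv : χ ![a,b,v] = 0) (hw : χ ![a,b,w] = 0)
    (hbasis : χ ![u,v,w] ≠ 0) (y : E) : χ ![a,b,y] = 0 := by
  have h1 : 0 ≤ χ ![a,b,y] * χ ![u,v,w] := by
    apply chi_b3 hχ <;> simp [hu, hv, hw]
  have h2 : 0 ≤ χ ![a,b,y] * χ ![v,u,w] := by
    apply chi_b3 hχ <;> simp [hu, hv, hw]
  rw [chi_swap01 hχ u v w] at h2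
  have h3 : χ ![a,b,y] * χ ![u,v,w] = 0 := by nlinarith
  rcases mul_eq_zero.1 h3 with h | h
  · exact h
  · exact absurd h hbasis

lemma cocircuit_repr {c : E → ℤ} (hc : IsCocircuit χ c) :
    ∃ a b : E, ∀ y, c y = χ ![a,b,y] := by
  obtain ⟨-, i, t, hct⟩ := hc
  have h : ∀ y, c y = χ (Function.update t i y) := fun y => by rw [hct]
  obtain ⟨iv, hi⟩ := i
  match iv, hi with
  | 0, hi =>
    refine ⟨t 1, t 2, fun y => ?_⟩
    have e : Function.update t ⟨0, hi⟩ y = ![y, t 1, t 2] := by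
      funext j; fin_cases j <;> simp [Function.update]
    rw [h y, e]; exact chi_cyc hχ (t 1) (t 2) y
  | 1, hi =>
    refine ⟨t 2, t 0, fun y => ?_⟩
    have e : Function.update t ⟨1, hi⟩ y = ![t 0, y, t 2] := by
      funext j; fin_cases j <;> simp [Function.update]
    rw [h y, e]; exact (chi_cyc hχ (t 0) y (t 2)).symm
  | 2, hi =>
    refine ⟨t 0, t 1, fun y => ?_⟩
    have e : Function.update t ⟨2, hi⟩ y = ![t 0, t 1, y] := by
      funext j; fin_cases j <;> simp [Function.update]
    rw [h y, e]

end chi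

section finp
variable {p : ℕ} [NeZero p]

lemma finp_mk_eq_cast {k : ℕ} (hk : k < p) : (⟨k, hk⟩ : Fin p) = (k : Fin p) := by
  ext; simp [Fin.val_natCast, Nat.mod_eq_of_lt hk]

lemma finp_val_cast {k : ℕ} (hk : k < p) : ((k : Fin p)).val = k := by
  simp [Fin.val_natCast, Nat.mod_eq_of_lt hk]

lemma finp_add_val (a b : Fin p) : a.val + b.val = (a + b).val ∨ a.val + b.val = (a + b).val + p := by
  rcases Nat.lt_or_ge (a.val + b.val) p with h | h
  · left; rw [Fin.val_add, Nat.mod_eq_of_lt h]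
  · right; rw [Fin.val_add]
    have h2 : a.val + b.val - p < p := by
      have := a.isLt; have := b.isLt; omega
    rw [Nat.mod_eq_sub_mod h, Nat.mod_eq_of_lt h2]
    omega

lemma finp_sub_val (a b : Fin p) : b.val + (a - b).val = a.val ∨ b.val + (a - b).val = a.val + p := by
  have h := finp_add_val b (a - b)
  have h2 : b + (a - b) = a := by ring
  rw [h2] at h
  omega

lemma finp_val_ne_zero {a : Fin p} (h : a ≠ 0) : a.val ≠ 0 := by
  intro h0; exact h (by ext; simp [h0])

lemma finp_sub_ne_zero {a b : Fin p} (h : a ≠ b) : a - b ≠ 0 := by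
  intro h0; exact h (by rw [← sub_eq_zero]; exact h0)

lemma finp_self_eq (a : Fin p) : ((a.val : ℕ) : Fin p) = a := Fin.cast_val_eq_self a

lemma finp_add_sub (a b : Fin p) : a + ((b - a).val : Fin p) = b := by
  rw [finp_self_eq]; ring

lemma finp_neg_one (hp : 1 ≤ p) : ((p - 1 : ℕ) : Fin p) = -1 := by
  have : ((p - 1 : ℕ) : Fin p) = (p : Fin p) - 1 := by
    push_cast [Nat.cast_sub hp]; ring
  rw [this]; simp

lemma finp_sub_add_val {a b : Fin p} (h : a ≠ b) :
    1 ≤ (b - a).val ∧ (b - a).val ≤ p - 1 ∧ (a - b).val = p - (b - a).val := by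
  have h1 : (b - a).val ≠ 0 := finp_val_ne_zero (finp_sub_ne_zero (Ne.symm h))
  have h2 : (a - b).val ≠ 0 := finp_val_ne_zero (finp_sub_ne_zero h)
  have h3 := finp_add_val (b - a) (a - b)
  have h4 : (b - a) + (a - b) = 0 := by ring
  rw [h4] at h3
  have := (b - a).isLt; have := (a - b).isLt
  simp only [Fin.val_zero] at h3
  omega

end finp

variable {E : Type*}

/-- chord sign: `χ (x m, x j, e)` -/
def uu (χ : (Fin 3 → E) → ℤ) {p : ℕ} (x : Fin p → E) (e : E) (m j : Fin p) : ℤ :=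
  χ ![x m, x j, e]

/-- polygon bracket -/
def vv (χ : (Fin 3 → E) → ℤ) {p : ℕ} (x : Fin p → E) (a b c : Fin p) : ℤ :=
  χ ![x a, x b, x c]

section poly

variable {χ : (Fin 3 → E) → ℤ} (hχ : IsChirotope χ)
  {p : ℕ} [NeZero p] (hp : 3 ≤ p) {x : Fin p → E}
  (halt : ∀ i j k : Fin p, i < j → j < k → χ ![x i, x j, x k] = 1)
  {e : E}

include hχ

lemma uu_anti (m j : Fin p) : uu χ x e j m = - uu χ x e m j := chi_swap01 hχ _ _ _

lemma uu_self (m : Fin p) : uu χ x e m m = 0 := chi_dup01 hχ _ _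

lemma uu_range (m j : Fin p) : uu χ x e m j = 1 ∨ uu χ x e m j = 0 ∨ uu χ x e m j = -1 :=
  hχ.1 _

lemma vv_swap23 (a b c : Fin p) : vv χ x a c b = - vv χ x a b c := chi_swap12 hχ _ _ _

include halt

lemma vv_pos (m : Fin p) (α β : ℕ) (hα : 1 ≤ α) (hαβ : α < β) (hβ : β < p) :
    vv χ x m (m + (α : Fin p)) (m + (β : Fin p)) = 1 := by
  have hαp : α < p := lt_trans hαβ hβ
  have hm := m.isLt
  have hA : ((m + (α : Fin p))).val = (m.val + α) % p := by
    rw [Fin.val_add, finp_val_cast hαp]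
  have hB : ((m + (β : Fin p))).val = (m.val + β) % p := by
    rw [Fin.val_add, finp_val_cast hβ]
  rcases Nat.lt_or_ge (m.val + β) p with h1 | h1
  · -- no wrap
    have hA' : ((m + (α : Fin p))).val = m.val + α := by
      rw [hA, Nat.mod_eq_of_lt (by omega)]
    have hB' : ((m + (β : Fin p))).val = m.val + β := by
      rw [hB, Nat.mod_eq_of_lt h1]
    exact halt m _ _ (by rw [Fin.lt_def, hA']; omega) (by rw [Fin.lt_def, hA', hB']; omega)
  · rcases Nat.lt_or_ge (m.val + α) p with h2 | h2
    · -- only β wraps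
      have hA' : ((m + (α : Fin p))).val = m.val + α := by
        rw [hA, Nat.mod_eq_of_lt h2]
      have hB' : ((m + (β : Fin p))).val = m.val + β - p := by
        rw [hB, Nat.mod_eq_sub_mod h1, Nat.mod_eq_of_lt (by omega)]
      have h3 := halt (m + (β : Fin p)) m (m + (α : Fin p)) (by rw [Fin.lt_def, hB']; omega) (by rw [Fin.lt_def, hA']; omega)
      rw [vv, ← h3]
      exact (chi_cyc hχ (x m) (x (m + (α : Fin p))) (x (m + (β : Fin p)))).symm
    · -- both wrap
      have hA' : ((m + (α : Fin p))).val = m.val + α - p := by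
        rw [hA, Nat.mod_eq_sub_mod h2, Nat.mod_eq_of_lt (by omega)]
      have hB' : ((m + (β : Fin p))).val = m.val + β - p := by
        rw [hB, Nat.mod_eq_sub_mod h1, Nat.mod_eq_of_lt (by omega)]
      have h3 := halt (m + (α : Fin p)) (m + (β : Fin p)) m
        (by rw [Fin.lt_def, hA', hB']; omega) (by rw [Fin.lt_def, hB']; omega)
      rw [vv, ← h3]
      exact (chi_cyc hχ (x (m + (α : Fin p))) (x (m + (β : Fin p))) (x m))




lemma vv_neg (m : Fin p) (α β : ℕ) (hα : 1 ≤ α) (hαβ : α < β) (hβ : β < p) :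
    vv χ x m (m + (β : Fin p)) (m + (α : Fin p)) = -1 := by
  rw [vv_swap23 hχ, vv_pos hχ halt m α β hα hαβ hβ]

omit halt in
lemma t2c (m A B C : Fin p)
    (h1 : vv χ x m A B * uu χ x e m C ≤ 0)
    (h2 : 0 ≤ vv χ x m A C * uu χ x e m B) :
    0 ≤ uu χ x e m A * vv χ x m B C := by
  have h0 : 0 ≤ χ ![x m, x A, x m] * χ ![e, x B, x C] := by
    rw [chi_dup02 hχ]; simp
  have h1' : 0 ≤ χ ![x m, x A, x B] * χ ![x m, e, x C] := by
    have hs : χ ![x m, e, x C] = - χ ![x m, x C, e] := chi_swap12 hχ (x m) (x C) e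
    rw [hs]
    show 0 ≤ vv χ x m A B * -(uu χ x e m C)
    nlinarith [h1]
  have h2'' : 0 ≤ χ ![x m, x A, x C] * χ ![x m, x B, e] := h2
  exact chi_b3 hχ (x m) (x A) e (x m) (x B) (x C) h0 h1' h2''

omit halt in
lemma chi_all_zero_slot {a0 b0 : E} (hall : ∀ y, χ ![a0, b0, y] = 0)
    (t : Fin 3 → E) (i' j' : Fin 3) (hij : i' ≠ j') (hti : t i' = b0) (htj : t j' = a0) :
    χ t = 0 := by
  have heta : χ t = χ ![t 0, t 1, t 2] := congrArg χ (vec3_eta t)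
  obtain ⟨iv, hi⟩ := i'; obtain ⟨jv, hj⟩ := j'
  have hij' : iv ≠ jv := fun h => hij (by simp [h])
  match iv, hi, jv, hj with
  | 0, hi, 1, hj =>
    have h0 : t 0 = b0 := hti
    have h1 : t 1 = a0 := htj
    rw [heta, h0, h1]
    have := chi_swap01 hχ a0 b0 (t 2)
    rw [this, hall (t 2)]; ring
  | 0, hi, 2, hj =>
    have h0 : t 0 = b0 := hti
    have h1 : t 2 = a0 := htj
    rw [heta, h0, h1, ← chi_cyc hχ b0 (t 1) a0]
    exact hall (t 1)
  | 1, hi, 0, hj =>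
    have h0 : t 1 = b0 := hti
    have h1 : t 0 = a0 := htj
    rw [heta, h0, h1]; exact hall (t 2)
  | 1, hi, 2, hj =>
    have h0 : t 1 = b0 := hti
    have h1 : t 2 = a0 := htj
    rw [heta, h0, h1]
    have := chi_swap02 hχ a0 b0 (t 0)
    rw [this, hall (t 0)]; ring
  | 2, hi, 0, hj =>
    have h0 : t 2 = b0 := hti
    have h1 : t 0 = a0 := htj
    rw [heta, h0, h1]
    have := chi_swap12 hχ a0 b0 (t 1)
    rw [this, hall (t 1)]; ring
  | 2, hi, 1, hj =>
    have h0 : t 2 = b0 := hti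
    have h1 : t 1 = a0 := htj
    rw [heta, h0, h1, chi_cyc hχ a0 b0 (t 0)]
    exact hall (t 0)
  | 0, hi, 0, hj => exact absurd rfl hij'
  | 1, hi, 1, hj => exact absurd rfl hij'
  | 2, hi, 2, hj => exact absurd rfl hij'

lemma vv_ne0 {a b c : Fin p} (hab : a ≠ b) (hac : a ≠ c) (hbc : b ≠ c) :
    vv χ x a b c ≠ 0 := by
  obtain ⟨hκ1, hκ2, -⟩ := finp_sub_add_val hab
  obtain ⟨hμ1, hμ2, -⟩ := finp_sub_add_val hac
  have hb' : b = a + (((b - a).val : ℕ) : Fin p) := (finp_add_sub a b).symm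
  have hc' : c = a + (((c - a).val : ℕ) : Fin p) := (finp_add_sub a c).symm
  have hne : (b - a).val ≠ (c - a).val := by
    intro h
    apply hbc
    rw [hb', hc', h]
  have h1 := NeZero.pos p
  rcases lt_or_gt_of_ne hne with h | h
  · have := vv_pos hχ halt a ((b-a).val) ((c-a).val) hκ1 h (by omega)
    rw [← hb', ← hc'] at this
    omega
  · have := vv_neg hχ halt a ((c-a).val) ((b-a).val) hμ1 h (by omega)
    rw [← hb', ← hc'] at this
    omega

lemma uu_two_zeros {m j k : Fin p} (hsimple : OMSimple χ) (he : e ∉ Set.range x)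
    (hjm : j ≠ m) (hkm : k ≠ m) (hjk : j ≠ k)
    (hj : uu χ x e m j = 0) (hk : uu χ x e m k = 0) : False := by
  have hbasis : χ ![x j, x k, x m] ≠ 0 := vv_ne0 hχ halt hjk hjm hkm
  have hz1 : χ ![x m, e, x j] = 0 := by
    rw [chi_swap12 hχ (x m) (x j) e]
    show -(uu χ x e m j) = 0
    rw [hj]; ring
  have hz2 : χ ![x m, e, x k] = 0 := by
    rw [chi_swap12 hχ (x m) (x k) e]
    show -(uu χ x e m k) = 0
    rw [hk]; ring
  have hz3 : χ ![x m, e, x m] = 0 := chi_dup02 hχ (x m) e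
  have hall : ∀ y, χ ![x m, e, y] = 0 := fun y =>
    chi_zero3 hχ (x m) e (x j) (x k) (x m) hz1 hz2 hz3 hbasis y
  have hne : e ≠ x m := fun h => he ⟨m, h.symm⟩
  obtain ⟨t, ht0, i', j', hij, hti, htj⟩ := hsimple.2 e (x m) hne
  exact ht0 (chi_all_zero_slot hχ hall t i' j' hij hti htj)


include hp

omit hχ halt in
lemma em1 (m : Fin p) : m + (((p-1:ℕ)) : Fin p) = m - 1 := by
  rw [finp_neg_one (by omega)]; ring

lemma vv_one_delta (m : Fin p) (δ : ℕ) (h2 : 2 ≤ δ) (h3 : δ ≤ p-1) :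
    vv χ x m (m+1) (m+(δ : Fin p)) = 1 := by
  have h := vv_pos hχ halt m 1 δ (le_refl 1) (by omega) (by omega)
  rwa [Nat.cast_one] at h

lemma vv_one_neg (m : Fin p) : vv χ x m (m+1) (m-1) = 1 := by
  have h := vv_one_delta hχ hp halt m (p-1) (by omega) (le_refl _)
  rwa [em1 hp m] at h

lemma vv_delta_neg (m : Fin p) (δ : ℕ) (h2 : 2 ≤ δ) (h3 : δ ≤ p-2) :
    vv χ x m (m+(δ : Fin p)) (m-1) = 1 := by
  have h := vv_pos hχ halt m δ (p-1) (by omega) (by omega) (by omega)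
  rwa [em1 hp m] at h

lemma lap (m : Fin p) (h1 : 0 < uu χ x e m (m - 1)) (h2 : 0 ≤ uu χ x e m (m + 1))
    (δ : ℕ) (hδ2 : 2 ≤ δ) (hδp : δ ≤ p - 1) : 0 < uu χ x e m (m + (δ : Fin p)) := by
  rcases eq_or_ne δ (p-1) with h | h
  · rw [h, em1 hp m]; exact h1
  rcases lt_or_eq_of_le h2 with hs | hs
  · by_contra hc
    push_neg at hc
    have c1 : vv χ x m (m+1) (m-1) * uu χ x e m (m + (δ : Fin p)) ≤ 0 := by
      rw [vv_one_neg hχ hp halt m]; linarith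
    have c2 : 0 ≤ vv χ x m (m+1) (m+(δ : Fin p)) * uu χ x e m (m-1) := by
      rw [vv_one_delta hχ hp halt m δ hδ2 hδp]; linarith
    have := t2c hχ m (m+1) (m-1) (m+(δ:Fin p)) c1 c2
    have hv : vv χ x m (m-1) (m+(δ:Fin p)) = -1 := by
      have := vv_delta_neg hχ hp halt m δ hδ2 (by omega)
      have hsw := vv_swap23 hχ (x := x) m (m+(δ:Fin p)) (m-1)
      omega
    rw [hv] at this
    nlinarith
  · by_contra hc
    push_neg at hc
    have c1 : vv χ x m (m-1) (m+(δ:Fin p)) * uu χ x e m (m + 1) ≤ 0 := by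
      rw [← hs]; ring_nf; rfl
    have c2 : 0 ≤ vv χ x m (m-1) (m+1) * uu χ x e m (m+(δ:Fin p)) := by
      have hv : vv χ x m (m-1) (m+1) = -1 := by
        have := vv_one_neg hχ hp halt m
        have hsw := vv_swap23 hχ (x := x) m (m+1) (m-1)
        omega
      rw [hv]; linarith
    have := t2c hχ m (m-1) (m+(δ:Fin p)) (m+1) c1 c2
    have hv : vv χ x m (m+(δ:Fin p)) (m+1) = -1 := by
      have := vv_one_delta hχ hp halt m δ hδ2 hδp
      have hsw := vv_swap23 hχ (x := x) m (m+1) (m+(δ:Fin p))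
      omega
    rw [hv] at this
    nlinarith

lemma lan (m : Fin p) (h1 : uu χ x e m (m - 1) < 0) (h2 : uu χ x e m (m + 1) ≤ 0)
    (δ : ℕ) (hδ2 : 2 ≤ δ) (hδp : δ ≤ p - 1) : uu χ x e m (m + (δ : Fin p)) < 0 := by
  rcases eq_or_ne δ (p-1) with h | h
  · rw [h, em1 hp m]; exact h1
  rcases lt_or_eq_of_le h2 with hs | hs
  · by_contra hc
    push_neg at hc
    have c1 : vv χ x m (m+1) (m+(δ:Fin p)) * uu χ x e m (m - 1) ≤ 0 := by
      rw [vv_one_delta hχ hp halt m δ hδ2 hδp]; linarith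
    have c2 : 0 ≤ vv χ x m (m+1) (m-1) * uu χ x e m (m+(δ:Fin p)) := by
      rw [vv_one_neg hχ hp halt m]; linarith
    have := t2c hχ m (m+1) (m+(δ:Fin p)) (m-1) c1 c2
    rw [vv_delta_neg hχ hp halt m δ hδ2 (by omega)] at this
    nlinarith
  · by_contra hc
    push_neg at hc
    have c1 : vv χ x m (m-1) (m+1) * uu χ x e m (m+(δ:Fin p)) ≤ 0 := by
      have hv : vv χ x m (m-1) (m+1) = -1 := by
        have := vv_one_neg hχ hp halt m
        have hsw := vv_swap23 hχ (x := x) m (m+1) (m-1)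
        omega
      rw [hv]; linarith
    have c2 : 0 ≤ vv χ x m (m-1) (m+(δ:Fin p)) * uu χ x e m (m+1) := by
      rw [hs]; ring_nf; rfl
    have := t2c hχ m (m-1) (m+1) (m+(δ:Fin p)) c1 c2
    rw [vv_one_delta hχ hp halt m δ hδ2 hδp] at this
    nlinarith

lemma lap2 (m : Fin p) (h1 : uu χ x e m (m - 1) = 0) (h2 : 0 < uu χ x e m (m + 1))
    (δ : ℕ) (hδ1 : 1 ≤ δ) (hδp : δ ≤ p - 2) : 0 < uu χ x e m (m + (δ : Fin p)) := by
  rcases eq_or_ne δ 1 with h | h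
  · rw [h, Nat.cast_one]; exact h2
  by_contra hc
  push_neg at hc
  have c1 : vv χ x m (m+1) (m-1) * uu χ x e m (m+(δ:Fin p)) ≤ 0 := by
    rw [vv_one_neg hχ hp halt m]; linarith
  have c2 : 0 ≤ vv χ x m (m+1) (m+(δ:Fin p)) * uu χ x e m (m-1) := by
    rw [h1]; ring_nf; rfl
  have := t2c hχ m (m+1) (m-1) (m+(δ:Fin p)) c1 c2
  have hv : vv χ x m (m-1) (m+(δ:Fin p)) = -1 := by
    have := vv_delta_neg hχ hp halt m δ (by omega) hδp
    have hsw := vv_swap23 hχ (x := x) m (m+(δ:Fin p)) (m-1)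
    omega
  rw [hv] at this
  nlinarith

lemma lan2 (m : Fin p) (h1 : uu χ x e m (m - 1) = 0) (h2 : uu χ x e m (m + 1) < 0)
    (δ : ℕ) (hδ1 : 1 ≤ δ) (hδp : δ ≤ p - 2) : uu χ x e m (m + (δ : Fin p)) < 0 := by
  rcases eq_or_ne δ 1 with h | h
  · rw [h, Nat.cast_one]; exact h2
  by_contra hc
  push_neg at hc
  have c1 : vv χ x m (m+1) (m+(δ:Fin p)) * uu χ x e m (m-1) ≤ 0 := by
    rw [h1]; ring_nf; rfl
  have c2 : 0 ≤ vv χ x m (m+1) (m-1) * uu χ x e m (m+(δ:Fin p)) := by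
    rw [vv_one_neg hχ hp halt m]; linarith
  have := t2c hχ m (m+1) (m+(δ:Fin p)) (m-1) c1 c2
  rw [vv_delta_neg hχ hp halt m δ (by omega) hδp] at this
  nlinarith


omit hχ hp halt in
lemma finp_ne_add (m : Fin p) (δ : ℕ) (h1 : 1 ≤ δ) (h2 : δ ≤ p-1) : m ≠ m + (δ : Fin p) := by
  intro h
  have hv : (m + (δ : Fin p)).val = (m.val + δ) % p := by
    rw [Fin.val_add, finp_val_cast (by omega)]
  rw [← h] at hv
  have := m.isLt
  rcases Nat.lt_or_ge (m.val + δ) p with h3 | h3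
  · rw [Nat.mod_eq_of_lt h3] at hv; omega
  · rw [Nat.mod_eq_sub_mod h3, Nat.mod_eq_of_lt (by omega)] at hv; omega

lemma zz_aux (hsimple : OMSimple χ) (he : e ∉ Set.range x) (m : Fin p)
    (h0 : uu χ x e m (m+1) = 0) (h1 : uu χ x e (m+1) (m+1+1) = 0) : False := by
  have c2 : ((2:ℕ) : Fin p) = 2 := by norm_num
  have c1 : ((1:ℕ) : Fin p) = 1 := Nat.cast_one
  have hne1 : m ≠ m + 1 := by have := finp_ne_add (p := p) m 1 (le_refl 1) (by omega); rwa [c1] at this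
  have hne2 : (m+1) + 1 ≠ m + 1 := by
    have h := finp_ne_add (p := p) (m+1) 1 (le_refl 1) (by omega); rw [c1] at h; exact Ne.symm h
  have hne3 : m ≠ m + 1 + 1 := by
    have := finp_ne_add (p := p) m 2 (by omega) (by omega)
    rw [c2] at this
    intro h; exact this (h.trans (by ring))
  refine uu_two_zeros hχ halt hsimple he (m := m+1) (j := m) (k := m+1+1) hne1 hne2 hne3 ?_ h1
  have := uu_anti hχ (x := x) (e := e) m (m+1)
  omega

lemma up1 (m m' : Fin p) (ha1 : 0 < uu χ x e m (m-1)) (ha2 : 0 ≤ uu χ x e m (m+1))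
    (hb1 : 0 < uu χ x e m' (m'-1)) (hb2 : 0 ≤ uu χ x e m' (m'+1)) : m = m' := by
  by_contra hne
  obtain ⟨hδ1, hδ2, hδ3⟩ := finp_sub_add_val hne
  set δ := (m' - m).val with hδdef
  have hm' : m' = m + (δ : Fin p) := (finp_add_sub m m').symm
  have hm2 : m = m' + ((p - δ : ℕ) : Fin p) := by
    rw [← hδ3]; exact (finp_add_sub m' m).symm
  rcases eq_or_ne δ 1 with h1' | h1'
  · have hq : m' = m + 1 := by rw [hm', h1', Nat.cast_one]
    have hsimp : (m:Fin p) + 1 - 1 = m := by ring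
    rw [hq, hsimp] at hb1
    have := uu_anti hχ (x := x) (e := e) m (m+1)
    omega
  rcases eq_or_ne δ (p-1) with hp1 | hp1
  · have hq : m = m' + 1 := by
      rw [hm2, hp1, show p - (p-1) = 1 from by omega, Nat.cast_one]
    have hsimp : (m':Fin p) + 1 - 1 = m' := by ring
    rw [hq, hsimp] at ha1
    have := uu_anti hχ (x := x) (e := e) m' (m'+1)
    omega
  · have l1 := lap hχ hp halt m ha1 ha2 δ (by omega) hδ2
    have l2 := lap hχ hp halt m' hb1 hb2 (p - δ) (by omega) (by omega)
    rw [← hm'] at l1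
    rw [← hm2] at l2
    have := uu_anti hχ (x := x) (e := e) m m'
    omega

lemma up2 (M q : Fin p) (h1 : uu χ x e M (M-1) = 0) (h2 : 0 < uu χ x e M (M+1))
    (hq1 : 0 < uu χ x e q (q-1)) (hq2 : 0 ≤ uu χ x e q (q+1)) : q = M - 1 := by
  by_contra hne
  have hqM : q ≠ M := by intro h; rw [h, h1] at hq1; omega
  obtain ⟨hδ1, hδ2, hδ3⟩ := finp_sub_add_val (Ne.symm hqM)
  set δ := (q - M).val with hδdef
  have hq' : q = M + (δ : Fin p) := (finp_add_sub M q).symm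
  rcases eq_or_ne δ 1 with h1' | h1'
  · have hqq : q = M + 1 := by rw [hq', h1', Nat.cast_one]
    have hsimp : (M:Fin p) + 1 - 1 = M := by ring
    rw [hqq, hsimp] at hq1
    have := uu_anti hχ (x := x) (e := e) M (M+1)
    omega
  rcases eq_or_ne δ (p-1) with hp1 | hp1
  · exact hne (by rw [hq', hp1, em1 hp M])
  · have l1 := lap2 hχ hp halt M h1 h2 δ (by omega) (by omega)
    have l2 := lap hχ hp halt q hq1 hq2 (p - δ) (by omega) (by omega)
    rw [← hq'] at l1
    have hM2 : M = q + ((p - δ : ℕ) : Fin p) := by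
      rw [← hδ3]; exact (finp_add_sub q M).symm
    rw [← hM2] at l2
    have := uu_anti hχ (x := x) (e := e) M q
    omega

lemma up3 (M M' : Fin p) (h1 : uu χ x e M (M-1) = 0) (h2 : 0 < uu χ x e M (M+1))
    (h1' : uu χ x e M' (M'-1) = 0) (h2' : 0 < uu χ x e M' (M'+1)) : M = M' := by
  by_contra hne
  obtain ⟨hδ1, hδ2, hδ3⟩ := finp_sub_add_val hne
  set δ := (M' - M).val with hδdef
  have hm' : M' = M + (δ : Fin p) := (finp_add_sub M M').symm
  rcases eq_or_ne δ 1 with h1'' | h1''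
  · have hq : M' = M + 1 := by rw [hm', h1'', Nat.cast_one]
    have hsimp : (M:Fin p) + 1 - 1 = M := by ring
    rw [hq, hsimp] at h1'
    have := uu_anti hχ (x := x) (e := e) M (M+1)
    omega
  rcases eq_or_ne δ (p-1) with hp1 | hp1
  · have hq : M = M' + 1 := by
      rw [show M = M' + ((p - δ : ℕ) : Fin p) from by rw [← hδ3]; exact (finp_add_sub M' M).symm,
        hp1, show p - (p-1) = 1 from by omega, Nat.cast_one]
    have hsimp : (M':Fin p) + 1 - 1 = M' := by ring
    rw [hq, hsimp] at h1
    have := uu_anti hχ (x := x) (e := e) M' (M'+1)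
    omega
  · have l1 := lap2 hχ hp halt M h1 h2 δ (by omega) (by omega)
    have l2 := lap2 hχ hp halt M' h1' h2' (p - δ) (by omega) (by omega)
    rw [← hm'] at l1
    have hM2 : M = M' + ((p - δ : ℕ) : Fin p) := by
      rw [← hδ3]; exact (finp_add_sub M' M).symm
    rw [← hM2] at l2
    have := uu_anti hχ (x := x) (e := e) M M'
    omega

lemma dn1 (m m' : Fin p) (ha1 : uu χ x e m (m-1) < 0) (ha2 : uu χ x e m (m+1) ≤ 0)
    (hb1 : uu χ x e m' (m'-1) < 0) (hb2 : uu χ x e m' (m'+1) ≤ 0) : m = m' := by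
  by_contra hne
  obtain ⟨hδ1, hδ2, hδ3⟩ := finp_sub_add_val hne
  set δ := (m' - m).val with hδdef
  have hm' : m' = m + (δ : Fin p) := (finp_add_sub m m').symm
  have hm2 : m = m' + ((p - δ : ℕ) : Fin p) := by
    rw [← hδ3]; exact (finp_add_sub m' m).symm
  rcases eq_or_ne δ 1 with h1' | h1'
  · have hq : m' = m + 1 := by rw [hm', h1', Nat.cast_one]
    have hsimp : (m:Fin p) + 1 - 1 = m := by ring
    rw [hq, hsimp] at hb1
    have := uu_anti hχ (x := x) (e := e) m (m+1)
    omega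
  rcases eq_or_ne δ (p-1) with hp1 | hp1
  · have hq : m = m' + 1 := by
      rw [hm2, hp1, show p - (p-1) = 1 from by omega, Nat.cast_one]
    have hsimp : (m':Fin p) + 1 - 1 = m' := by ring
    rw [hq, hsimp] at ha1
    have := uu_anti hχ (x := x) (e := e) m' (m'+1)
    omega
  · have l1 := lan hχ hp halt m ha1 ha2 δ (by omega) hδ2
    have l2 := lan hχ hp halt m' hb1 hb2 (p - δ) (by omega) (by omega)
    rw [← hm'] at l1
    rw [← hm2] at l2
    have := uu_anti hχ (x := x) (e := e) m m'
    omega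

lemma dn2 (M q : Fin p) (h1 : uu χ x e M (M-1) = 0) (h2 : uu χ x e M (M+1) < 0)
    (hq1 : uu χ x e q (q-1) < 0) (hq2 : uu χ x e q (q+1) ≤ 0) : q = M - 1 := by
  by_contra hne
  have hqM : q ≠ M := by intro h; rw [h, h1] at hq1; omega
  obtain ⟨hδ1, hδ2, hδ3⟩ := finp_sub_add_val (Ne.symm hqM)
  set δ := (q - M).val with hδdef
  have hq' : q = M + (δ : Fin p) := (finp_add_sub M q).symm
  rcases eq_or_ne δ 1 with h1' | h1'
  · have hqq : q = M + 1 := by rw [hq', h1', Nat.cast_one]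
    have hsimp : (M:Fin p) + 1 - 1 = M := by ring
    rw [hqq, hsimp] at hq1
    have := uu_anti hχ (x := x) (e := e) M (M+1)
    omega
  rcases eq_or_ne δ (p-1) with hp1 | hp1
  · exact hne (by rw [hq', hp1, em1 hp M])
  · have l1 := lan2 hχ hp halt M h1 h2 δ (by omega) (by omega)
    have l2 := lan hχ hp halt q hq1 hq2 (p - δ) (by omega) (by omega)
    rw [← hq'] at l1
    have hM2 : M = q + ((p - δ : ℕ) : Fin p) := by
      rw [← hδ3]; exact (finp_add_sub q M).symm
    rw [← hM2] at l2
    have := uu_anti hχ (x := x) (e := e) M q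
    omega

lemma dn3 (M M' : Fin p) (h1 : uu χ x e M (M-1) = 0) (h2 : uu χ x e M (M+1) < 0)
    (h1' : uu χ x e M' (M'-1) = 0) (h2' : uu χ x e M' (M'+1) < 0) : M = M' := by
  by_contra hne
  obtain ⟨hδ1, hδ2, hδ3⟩ := finp_sub_add_val hne
  set δ := (M' - M).val with hδdef
  have hm' : M' = M + (δ : Fin p) := (finp_add_sub M M').symm
  rcases eq_or_ne δ 1 with h1'' | h1''
  · have hq : M' = M + 1 := by rw [hm', h1'', Nat.cast_one]
    have hsimp : (M:Fin p) + 1 - 1 = M := by ring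
    rw [hq, hsimp] at h1'
    have := uu_anti hχ (x := x) (e := e) M (M+1)
    omega
  rcases eq_or_ne δ (p-1) with hp1 | hp1
  · have hq : M = M' + 1 := by
      rw [show M = M' + ((p - δ : ℕ) : Fin p) from by rw [← hδ3]; exact (finp_add_sub M' M).symm,
        hp1, show p - (p-1) = 1 from by omega, Nat.cast_one]
    have hsimp : (M':Fin p) + 1 - 1 = M' := by ring
    rw [hq, hsimp] at h1
    have := uu_anti hχ (x := x) (e := e) M' (M'+1)
    omega
  · have l1 := lan2 hχ hp halt M h1 h2 δ (by omega) (by omega)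
    have l2 := lan2 hχ hp halt M' h1' h2' (p - δ) (by omega) (by omega)
    rw [← hm'] at l1
    have hM2 : M = M' + ((p - δ : ℕ) : Fin p) := by
      rw [← hδ3]; exact (finp_add_sub M' M).symm
    rw [← hM2] at l2
    have := uu_anti hχ (x := x) (e := e) M M'
    omega

end poly

section core
variable {p : ℕ} [NeZero p]

lemma finp_add_nat_val (w : Fin p) (t : ℕ) : (w + (t : Fin p)).val = (w.val + t) % p := by
  rw [Fin.val_add, Fin.val_natCast]
  conv_rhs => rw [Nat.add_mod]
  rw [Nat.mod_eq_of_lt w.isLt]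

lemma blockAllNonneg (hp : 3 ≤ p) (s : Fin p → ℤ)
    (hval : ∀ m, s m = 1 ∨ s m = 0 ∨ s m = -1)
    (hzz : ∀ m, ¬(s m = 0 ∧ s (m+1) = 0))
    (hU3 : ∀ m m', s m = 0 → 0 < s (m+1) → s m' = 0 → 0 < s (m'+1) → m = m')
    (hall : ∀ m, 0 ≤ s m) :
    BlockPattern (fun k => if h : k < p then s ⟨k, h⟩ else 0) p := by
  by_cases hz : ∃ m, s m = 0
  · obtain ⟨m₀, hm₀⟩ := hz
    have huniq : ∀ m, s m = 0 → m = m₀ := by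
      intro m hm
      have h1 : 0 < s (m+1) := by
        rcases hval (m+1) with h | h | h
        · omega
        · exact absurd ⟨hm, h⟩ (hzz m)
        · have := hall (m+1); omega
      have h2 : 0 < s (m₀+1) := by
        rcases hval (m₀+1) with h | h | h
        · omega
        · exact absurd ⟨hm₀, h⟩ (hzz m₀)
        · have := hall (m₀+1); omega
      exact hU3 m m₀ hm h1 hm₀ h2
    refine ⟨m₀.val, m₀.val, le_refl _, m₀.isLt.le, fun k hk => ⟨?_, ?_, ?_⟩⟩
    · intro hlt
      simp only [dif_pos hk]
      have hne : (⟨k, hk⟩ : Fin p) ≠ m₀ := by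
        intro h
        have : k = m₀.val := congrArg Fin.val h
        omega
      rcases hval ⟨k, hk⟩ with h | h | h
      · exact h
      · exact absurd (huniq _ h) hne
      · have := hall (⟨k, hk⟩ : Fin p); omega
    · intro h1 h2
      have hkm : k = m₀.val := le_antisymm h2 h1
      right
      refine ⟨?_, Or.inl hkm⟩
      simp only [dif_pos hk]
      have : (⟨k, hk⟩ : Fin p) = m₀ := Fin.ext hkm
      rw [this]; exact hm₀
    · intro hlt
      simp only [dif_pos hk]
      have hne : (⟨k, hk⟩ : Fin p) ≠ m₀ := by
        intro h
        have : k = m₀.val := congrArg Fin.val h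
        omega
      rcases hval ⟨k, hk⟩ with h | h | h
      · exact h
      · exact absurd (huniq _ h) hne
      · have := hall (⟨k, hk⟩ : Fin p); omega
  · push_neg at hz
    refine ⟨p, p, le_refl _, le_refl _, fun k hk => ⟨?_, ?_, ?_⟩⟩
    · intro _
      simp only [dif_pos hk]
      rcases hval ⟨k, hk⟩ with h | h | h
      · exact h
      · exact absurd h (hz _)
      · have := hall (⟨k, hk⟩ : Fin p); omega
    · omega
    · omega

lemma blockAssemble (hp : 3 ≤ p) (s : Fin p → ℤ)
    (hval : ∀ m, s m = 1 ∨ s m = 0 ∨ s m = -1)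
    (u₀ d₀ : Fin p)
    (hDU : d₀.val < u₀.val)
    (wp : ∀ k : ℕ, k < (d₀ - u₀).val → (0 < s (u₀ + (k : Fin p)) ∨ (k = 0 ∧ s u₀ = 0)))
    (wm : ∀ k : ℕ, k < (u₀ - d₀).val → (s (d₀ + (k : Fin p)) < 0 ∨ (k = 0 ∧ s d₀ = 0))) :
    BlockPattern (fun k => if h : k < p then s ⟨k, h⟩ else 0) p := by
  have hne : u₀ ≠ d₀ := by intro h; rw [h] at hDU; omega
  set U := u₀.val with hU
  set D := d₀.val with hD
  have hUp := u₀.isLt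
  have hDp := d₀.isLt
  obtain ⟨hΔ1, hΔ2, hΔ3⟩ := finp_sub_add_val hne
  set Δ := (d₀ - u₀).val with hΔdef
  set Δ' := (u₀ - d₀).val with hΔ'def
  have hΔeq : Δ = D + p - U := by
    rcases finp_sub_val d₀ u₀ with h | h <;> omega
  have hΔ'eq : Δ' = U - D := by
    have := (u₀ - d₀).isLt
    rcases finp_sub_val u₀ d₀ with h | h <;> omega
  -- identify positions
  have hpos : ∀ (w : Fin p) (t k : ℕ) (hk : k < p), (w.val + t) % p = k → w + (t : Fin p) = ⟨k, hk⟩ := by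
    intro w t k hk h
    ext
    rw [finp_add_nat_val]
    exact h
  -- plus-run values
  have plus1 : ∀ k (hk : k < p), k < D → s ⟨k, hk⟩ = 1 := by
    intro k hk hkD
    have ht : u₀ + ((k + p - U : ℕ) : Fin p) = ⟨k, hk⟩ := by
      apply hpos
      have h1 : U + (k + p - U) = k + p := by omega
      rw [h1, Nat.add_mod_right, Nat.mod_eq_of_lt hk]
    have := wp (k + p - U) (by omega)
    rw [ht] at this
    rcases this with h | ⟨h, -⟩
    · rcases hval ⟨k, hk⟩ with h' | h' | h' <;> omega
    · omega
  have plus2 : ∀ k (hk : k < p), U < k → s ⟨k, hk⟩ = 1 := by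
    intro k hk hkU
    have ht : u₀ + ((k - U : ℕ) : Fin p) = ⟨k, hk⟩ := by
      apply hpos
      have h1 : U + (k - U) = k := by omega
      rw [h1, Nat.mod_eq_of_lt hk]
    have := wp (k - U) (by omega)
    rw [ht] at this
    rcases this with h | ⟨h, -⟩
    · rcases hval ⟨k, hk⟩ with h' | h' | h' <;> omega
    · omega
  have hatU : (⟨U, hUp⟩ : Fin p) = u₀ := Fin.ext rfl
  have hu₀val : 0 < s u₀ ∨ s u₀ = 0 := by
    have := wp 0 (by omega)
    have h0 : u₀ + ((0:ℕ) : Fin p) = u₀ := by push_cast; ring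
    rw [h0] at this
    tauto
  have minus1 : ∀ k (hk : k < p), D < k → k < U → s ⟨k, hk⟩ = -1 := by
    intro k hk h1 h2
    have ht : d₀ + ((k - D : ℕ) : Fin p) = ⟨k, hk⟩ := by
      apply hpos
      have h3 : D + (k - D) = k := by omega
      rw [h3, Nat.mod_eq_of_lt hk]
    have := wm (k - D) (by omega)
    rw [ht] at this
    rcases this with h | ⟨h, -⟩
    · rcases hval ⟨k, hk⟩ with h' | h' | h' <;> omega
    · omega
  have hatD : (⟨D, hDp⟩ : Fin p) = d₀ := Fin.ext rfl
  have hd₀val : s d₀ < 0 ∨ s d₀ = 0 := by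
    have := wm 0 (by omega)
    have h0 : d₀ + ((0:ℕ) : Fin p) = d₀ := by push_cast; ring
    rw [h0] at this
    tauto
  rcases eq_or_ne (s u₀) 0 with hsz | hsz
  · -- b = U
    refine ⟨D, U, by omega, by omega, fun k hk => ⟨?_, ?_, ?_⟩⟩
    · intro h; simp only [dif_pos hk]; exact plus1 k hk h
    · intro h1 h2
      simp only [dif_pos hk]
      rcases eq_or_ne k D with hD' | hD'
      · subst hD'
        rw [hatD]
        rcases hd₀val with h | h
        · left; rcases hval d₀ with h' | h' | h' <;> omega
        · right; exact ⟨h, Or.inl rfl⟩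
      · rcases eq_or_ne k U with hU' | hU'
        · subst hU'
          rw [hatU]
          right; exact ⟨hsz, Or.inr rfl⟩
        · left; exact minus1 k hk (by omega) (by omega)
    · intro h; simp only [dif_pos hk]; exact plus2 k hk h
  · -- b = U - 1
    have hsu : s u₀ = 1 := by
      rcases hu₀val with h | h
      · rcases hval u₀ with h' | h' | h' <;> omega
      · omega
    refine ⟨D, U - 1, by omega, by omega, fun k hk => ⟨?_, ?_, ?_⟩⟩
    · intro h; simp only [dif_pos hk]; exact plus1 k hk h
    · intro h1 h2
      simp only [dif_pos hk]
      rcases eq_or_ne k D with hD' | hD'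
      · subst hD'
        rw [hatD]
        rcases hd₀val with h | h
        · left; rcases hval d₀ with h' | h' | h' <;> omega
        · right; exact ⟨h, Or.inl rfl⟩
      · left; exact minus1 k hk (by omega) (by omega)
    · intro h
      simp only [dif_pos hk]
      rcases eq_or_ne k U with hU' | hU'
      · subst hU'; rw [hatU]; exact hsu
      · exact plus2 k hk (by omega)


lemma blockMixed (hp : 3 ≤ p) (s : Fin p → ℤ)
    (hval : ∀ m, s m = 1 ∨ s m = 0 ∨ s m = -1)
    (hzz : ∀ m, ¬(s m = 0 ∧ s (m+1) = 0))
    (hU1 : ∀ m m', s (m-1) < 0 → 0 ≤ s m → s (m'-1) < 0 → 0 ≤ s m' → m = m')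
    (hU2 : ∀ m q, s m = 0 → 0 < s (m+1) → s (q-1) < 0 → 0 ≤ s q → q = m)
    (hD1 : ∀ m m', 0 < s (m-1) → s m ≤ 0 → 0 < s (m'-1) → 0 ≥ s m' → m = m')
    (hD2 : ∀ m q, s m = 0 → s (m+1) < 0 → 0 < s (q-1) → s q ≤ 0 → q = m)
    (hi : ∃ i, s i < 0) (hj : ∃ j, 0 < s j) :
    BlockPattern (fun k => if h : k < p then s ⟨k, h⟩ else 0) p ∨
    BlockPattern (fun k => if h : k < p then -(s ⟨k, h⟩) else 0) p := by
  obtain ⟨i, hi⟩ := hi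
  obtain ⟨j, hj⟩ := hj
  -- find u₀
  have hQ : ∃ k : ℕ, 0 ≤ s (i + ((k+1 : ℕ) : Fin p)) := by
    refine ⟨(j - (i+1)).val, ?_⟩
    have h : i + (((j - (i+1)).val + 1 : ℕ) : Fin p) = j := by
      push_cast
      ring
    rw [h]
    exact hj.le
  set u₀ := i + ((Nat.find hQ + 1 : ℕ) : Fin p) with hu₀def
  have hu₀ : 0 ≤ s u₀ := Nat.find_spec hQ
  have hu₀m : s (u₀ - 1) < 0 := by
    rcases Nat.eq_zero_or_pos (Nat.find hQ) with h0 | h0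
    · have h : u₀ - 1 = i := by rw [hu₀def, h0]; push_cast; ring
      rw [h]; exact hi
    · obtain ⟨k', hk'⟩ : ∃ k', Nat.find hQ = k' + 1 := ⟨Nat.find hQ - 1, by omega⟩
      have hmin := Nat.find_min hQ (m := k') (by omega)
      have h : u₀ - 1 = i + ((k'+1 : ℕ) : Fin p) := by
        rw [hu₀def, hk']; push_cast; ring
      rw [h]
      omega
  -- find d₀
  have hP : ∃ k : ℕ, s (j + ((k+1 : ℕ) : Fin p)) ≤ 0 := by
    refine ⟨(i - (j+1)).val, ?_⟩
    have h : j + (((i - (j+1)).val + 1 : ℕ) : Fin p) = i := by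
      push_cast
      ring
    rw [h]
    exact hi.le
  set d₀ := j + ((Nat.find hP + 1 : ℕ) : Fin p) with hd₀def
  have hd₀ : s d₀ ≤ 0 := Nat.find_spec hP
  have hd₀m : 0 < s (d₀ - 1) := by
    rcases Nat.eq_zero_or_pos (Nat.find hP) with h0 | h0
    · have h : d₀ - 1 = j := by rw [hd₀def, h0]; push_cast; ring
      rw [h]; exact hj
    · obtain ⟨k', hk'⟩ : ∃ k', Nat.find hP = k' + 1 := ⟨Nat.find hP - 1, by omega⟩
      have hmin := Nat.find_min hP (m := k') (by omega)
      have h : d₀ - 1 = j + ((k'+1 : ℕ) : Fin p) := by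
        rw [hd₀def, hk']; push_cast; ring
      rw [h]
      omega
  clear_value u₀ d₀
  clear hu₀def hd₀def hi hj
  have hne : u₀ ≠ d₀ := by intro h; rw [h] at hu₀m; omega
  obtain ⟨hΔ1, hΔ2, hΔ3⟩ := finp_sub_add_val hne
  -- the walks
  have wp : ∀ k : ℕ, k < (d₀ - u₀).val → (0 < s (u₀ + (k : Fin p)) ∨ (k = 0 ∧ s u₀ = 0)) := by
    intro k
    induction k with
    | zero =>
      intro _
      have h0 : u₀ + ((0:ℕ) : Fin p) = u₀ := by push_cast; ring
      rw [h0]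
      rcases hval u₀ with h | h | h
      · left; omega
      · right; exact ⟨rfl, h⟩
      · omega
    | succ k ih =>
      intro hk
      have hkΔ : k < (d₀ - u₀).val := by omega
      have hcast : u₀ + ((k+1 : ℕ) : Fin p) - 1 = u₀ + (k : Fin p) := by push_cast; ring
      have hnotd : u₀ + ((k+1 : ℕ) : Fin p) ≠ d₀ := by
        intro h
        have hsub : d₀ - u₀ = ((k+1 : ℕ) : Fin p) := by rw [← h]; ring
        have hval' : (d₀ - u₀).val = k + 1 := by
          rw [hsub, finp_val_cast (by omega)]
        omega
      rcases ih hkΔ with hpos | ⟨hk0, hsz⟩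
      · rcases hval (u₀ + ((k+1 : ℕ) : Fin p)) with h | h | h
        · left; omega
        · exfalso
          apply hnotd
          exact hD1 (u₀ + ((k+1 : ℕ) : Fin p)) d₀ (by rw [hcast]; exact hpos) (by omega)
            hd₀m (by omega)
        · exfalso
          apply hnotd
          exact hD1 (u₀ + ((k+1 : ℕ) : Fin p)) d₀ (by rw [hcast]; exact hpos) (by omega)
            hd₀m (by omega)
      · subst hk0
        have h1 : u₀ + ((0+1 : ℕ) : Fin p) = u₀ + 1 := by push_cast; ring
        rw [h1]
        rcases hval (u₀ + 1) with h | h | h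
        · left; omega
        · exact absurd ⟨hsz, h⟩ (hzz u₀)
        · exfalso
          exact hne.symm (hD2 u₀ d₀ hsz (by omega) hd₀m hd₀)
  have wm : ∀ k : ℕ, k < (u₀ - d₀).val → (s (d₀ + (k : Fin p)) < 0 ∨ (k = 0 ∧ s d₀ = 0)) := by
    intro k
    induction k with
    | zero =>
      intro _
      have h0 : d₀ + ((0:ℕ) : Fin p) = d₀ := by push_cast; ring
      rw [h0]
      rcases hval d₀ with h | h | h
      · omega
      · right; exact ⟨rfl, h⟩
      · left; omega
    | succ k ih =>
      intro hk
      have hkΔ : k < (u₀ - d₀).val := by omega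
      have hcast : d₀ + ((k+1 : ℕ) : Fin p) - 1 = d₀ + (k : Fin p) := by push_cast; ring
      have hnotu : d₀ + ((k+1 : ℕ) : Fin p) ≠ u₀ := by
        intro h
        have hsub : u₀ - d₀ = ((k+1 : ℕ) : Fin p) := by rw [← h]; ring
        have hval' : (u₀ - d₀).val = k + 1 := by
          rw [hsub, finp_val_cast (by omega)]
        omega
      rcases ih hkΔ with hneg | ⟨hk0, hsz⟩
      · rcases hval (d₀ + ((k+1 : ℕ) : Fin p)) with h | h | h
        · exfalso
          apply hnotu
          exact hU1 (d₀ + ((k+1 : ℕ) : Fin p)) u₀ (by rw [hcast]; exact hneg) (by omega)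
            hu₀m hu₀
        · exfalso
          apply hnotu
          exact hU1 (d₀ + ((k+1 : ℕ) : Fin p)) u₀ (by rw [hcast]; exact hneg) (by omega)
            hu₀m hu₀
        · left; omega
      · subst hk0
        have h1 : d₀ + ((0+1 : ℕ) : Fin p) = d₀ + 1 := by push_cast; ring
        rw [h1]
        rcases hval (d₀ + 1) with h | h | h
        · exfalso
          exact hne (hU2 d₀ u₀ hsz (by omega) hu₀m hu₀)
        · exact absurd ⟨hsz, h⟩ (hzz d₀)
        · left; omega
  rcases Nat.lt_trichotomy d₀.val u₀.val with hDU | hDU | hDU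
  · exact Or.inl (blockAssemble hp s hval u₀ d₀ hDU wp wm)
  · exact absurd (Fin.ext hDU : d₀ = u₀) (Ne.symm hne)
  · right
    have hval' : ∀ m, -(s m) = 1 ∨ -(s m) = 0 ∨ -(s m) = -1 := by
      intro m; rcases hval m with h | h | h <;> omega
    have wp' : ∀ k : ℕ, k < (u₀ - d₀).val →
        (0 < -(s (d₀ + (k : Fin p))) ∨ (k = 0 ∧ -(s d₀) = 0)) := by
      intro k hk
      rcases wm k hk with h | ⟨h1, h2⟩
      · left; omega
      · right; exact ⟨h1, by omega⟩
    have wm' : ∀ k : ℕ, k < (d₀ - u₀).val →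
        (-(s (u₀ + (k : Fin p))) < 0 ∨ (k = 0 ∧ -(s u₀) = 0)) := by
      intro k hk
      rcases wp k hk with h | ⟨h1, h2⟩
      · left; omega
      · right; exact ⟨h1, by omega⟩
    exact blockAssemble hp (fun m => -(s m)) hval' d₀ u₀ hDU wp' wm'


lemma coreCombinatorial (hp : 3 ≤ p) (s : Fin p → ℤ)
    (hval : ∀ m, s m = 1 ∨ s m = 0 ∨ s m = -1)
    (hzz : ∀ m, ¬(s m = 0 ∧ s (m+1) = 0))
    (hU1 : ∀ m m', s (m-1) < 0 → 0 ≤ s m → s (m'-1) < 0 → 0 ≤ s m' → m = m')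
    (hU2 : ∀ m q, s m = 0 → 0 < s (m+1) → s (q-1) < 0 → 0 ≤ s q → q = m)
    (hU3 : ∀ m m', s m = 0 → 0 < s (m+1) → s m' = 0 → 0 < s (m'+1) → m = m')
    (hD1 : ∀ m m', 0 < s (m-1) → s m ≤ 0 → 0 < s (m'-1) → s m' ≤ 0 → m = m')
    (hD2 : ∀ m q, s m = 0 → s (m+1) < 0 → 0 < s (q-1) → s q ≤ 0 → q = m)
    (hD3 : ∀ m m', s m = 0 → s (m+1) < 0 → s m' = 0 → s (m'+1) < 0 → m = m') :
    BlockPattern (fun k => if h : k < p then s ⟨k, h⟩ else 0) p ∨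
    BlockPattern (fun k => if h : k < p then -(s ⟨k, h⟩) else 0) p := by
  by_cases hneg : ∃ i, s i < 0
  · by_cases hpos : ∃ j, 0 < s j
    · exact blockMixed hp s hval hzz hU1 hU2 hD1 hD2 hneg hpos
    · push_neg at hpos
      right
      refine blockAllNonneg hp (fun m => -(s m)) ?_ ?_ ?_ ?_
      · intro m
        show -(s m) = 1 ∨ -(s m) = 0 ∨ -(s m) = -1
        rcases hval m with h | h | h <;> omega
      · intro m h
        have h1 : -(s m) = 0 := h.1
        have h2 : -(s (m+1)) = 0 := h.2
        exact hzz m ⟨by omega, by omega⟩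
      · intro m m' h1 h2 h3 h4
        have h1' : -(s m) = 0 := h1
        have h2' : 0 < -(s (m+1)) := h2
        have h3' : -(s m') = 0 := h3
        have h4' : 0 < -(s (m'+1)) := h4
        exact hD3 m m' (by omega) (by omega) (by omega) (by omega)
      · intro m
        show (0:ℤ) ≤ -(s m)
        exact neg_nonneg.2 (hpos m)
  · push_neg at hneg
    left
    exact blockAllNonneg hp s hval hzz hU3 hneg

end core

end AuxLemmas

open Fin.CommRing in
/-- In a simple rank-3 oriented matroid, if `x₀,…,x_{p−1}` define an alternating
matroid in this order, `e` is an element outside them, and `V i` is the cocircuit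
vanishing on `{x i, x (i+1)}` and positive on the other `x j`, then the cyclic sign
sequence `V 0 e, …, V (p−1) e` has at most one maximal block of `+`'s and one maximal
block of `−`'s, possibly separated by single zeros. -/
theorem alternating_extension_cocircuit_sign_pattern
    {E : Type*} (χ : (Fin 3 → E) → ℤ) (hχ : IsChirotope χ) (hsimple : OMSimple χ)
    (p : ℕ) [NeZero p] (hp : 3 ≤ p)
    (x : Fin p → E) (hxinj : Function.Injective x)
    (halt : ∀ i j k : Fin p, i < j → j < k → χ ![x i, x j, x k] = 1)
    (e : E) (he : e ∉ Set.range x)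
    (V : Fin p → E → ℤ)
    (hV : ∀ i : Fin p, IsCocircuit χ (V i) ∧ V i (x i) = 0 ∧ V i (x (i + 1)) = 0 ∧
        ∀ j : Fin p, j ≠ i → j ≠ i + 1 → V i (x j) = 1) :
    BlockPattern (fun k => if h : k < p then V ⟨k, h⟩ e else 0) p ∨
    BlockPattern (fun k => if h : k < p then -(V ⟨k, h⟩ e) else 0) p := by
  set s : Fin p → ℤ := fun i => uu χ x e i (i + 1) with hsdef
  have c1 : ((1:ℕ) : Fin p) = 1 := Nat.cast_one
  have c2 : ((2:ℕ) : Fin p) = 2 := by norm_num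
  -- identification V i e = s i
  have hVs : ∀ i : Fin p, V i e = s i := by
    intro i
    obtain ⟨hVcoc, hVi, hVi1, hVoth⟩ := hV i
    obtain ⟨a, b, hab⟩ := cocircuit_repr hχ hVcoc
    have h0 : χ ![a, b, x i] = 0 := by rw [← hab]; exact hVi
    have h1 : χ ![a, b, x (i+1)] = 0 := by rw [← hab]; exact hVi1
    have hne2i : i + 2 ≠ i := by
      have h := finp_ne_add (p := p) i 2 (by omega) (by omega)
      rw [c2] at h; exact Ne.symm h
    have hne2i1 : i + 2 ≠ i + 1 := by
      have h := finp_ne_add (p := p) (i+1) 1 (le_refl 1) (by omega)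
      rw [c1] at h
      intro hcon
      exact h (by rw [show i+1+1 = i+2 from by ring, hcon])
    have hw : χ ![a, b, x (i+2)] = 1 := by rw [← hab]; exact hVoth (i+2) hne2i hne2i1
    have huvw : χ ![x i, x (i+1), x (i+2)] = 1 := by
      have h := vv_pos hχ halt i 1 2 (le_refl 1) (by omega) (by omega)
      rw [c1, c2] at h
      exact h
    have hvuw : χ ![x (i+1), x i, x (i+2)] = -1 := by
      rw [chi_swap01 hχ (x i) (x (i+1)) (x (i+2)), huvw]
    show V i e = χ ![x i, x (i+1), e]
    rw [hab e]
    by_cases ht : χ ![x i, x (i+1), e] = 0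
    · rw [ht]
      have hA1 : 0 ≤ χ ![a,b,e] * χ ![x i, x (i+1), x (i+2)] := by
        apply chi_b3 hχ
        · rw [h0]; simp
        · rw [h1]; simp
        · rw [ht]; simp
      have hA2 : 0 ≤ χ ![a,b,e] * χ ![x (i+1), x i, x (i+2)] := by
        apply chi_b3 hχ
        · rw [h1]; simp
        · rw [h0]; simp
        · rw [chi_swap01 hχ (x i) (x (i+1)) e, ht]; simp
      rw [huvw] at hA1
      rw [hvuw] at hA2
      omega
    · by_cases hq : χ ![a,b,e] = 0
      · exfalso
        have hall := chi_zero3 hχ a b (x i) (x (i+1)) e h0 h1 hq ht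
        rw [hall (x (i+2))] at hw
        omega
      · rcases hχ.1 ![x i, x (i+1), e] with htv | htv | htv
        · have hB1 : 0 ≤ χ ![a,b,e] * χ ![x i, x (i+1), x (i+2)] := by
            apply chi_b3 hχ
            · rw [h0]; simp
            · rw [h1]; simp
            · rw [hw, htv]; simp
          rw [huvw] at hB1
          rcases hχ.1 ![a,b,e] with h | h | h <;> omega
        · exact absurd htv ht
        · have hB2 : 0 ≤ χ ![a,b,e] * χ ![x (i+1), x i, x (i+2)] := by
            apply chi_b3 hχ
            · rw [h1]; simp
            · rw [h0]; simp
            · rw [hw, chi_swap01 hχ (x i) (x (i+1)) e, htv]; simp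
          rw [hvuw] at hB2
          rcases hχ.1 ![a,b,e] with h | h | h <;> omega
  -- translation helpers
  have key : ∀ m : Fin p, uu χ x e m (m - 1) = -(s (m - 1)) := by
    intro m
    have h2 : s (m - 1) = uu χ x e (m - 1) m := by
      show uu χ x e (m-1) ((m-1)+1) = uu χ x e (m-1) m
      rw [sub_add_cancel]
    rw [h2]
    exact uu_anti hχ (x := x) (e := e) (m - 1) m
  have keym : ∀ m : Fin p, uu χ x e (m + 1) ((m + 1) - 1) = -(s m) := by
    intro m
    have h3 : (m + 1) - 1 = m := by ring
    rw [h3]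
    exact uu_anti hχ (x := x) (e := e) m (m + 1)
  -- core hypotheses
  have hval : ∀ m, s m = 1 ∨ s m = 0 ∨ s m = -1 := fun m => hχ.1 _
  have hzz : ∀ m, ¬(s m = 0 ∧ s (m+1) = 0) := by
    rintro m ⟨ha, hb⟩
    exact zz_aux hχ hp halt hsimple he m ha hb
  have hU1 : ∀ m m', s (m-1) < 0 → 0 ≤ s m → s (m'-1) < 0 → 0 ≤ s m' → m = m' := by
    intro m m' a1 a2 b1 b2
    exact up1 hχ hp halt m m' (by rw [key m]; omega) a2 (by rw [key m']; omega) b2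
  have hU2 : ∀ m q, s m = 0 → 0 < s (m+1) → s (q-1) < 0 → 0 ≤ s q → q = m := by
    intro m q a1 a2 b1 b2
    have h := up2 hχ hp halt (m+1) q (by rw [keym m]; omega) a2 (by rw [key q]; omega) b2
    rw [h]; ring
  have hU3 : ∀ m m', s m = 0 → 0 < s (m+1) → s m' = 0 → 0 < s (m'+1) → m = m' := by
    intro m m' a1 a2 b1 b2
    have h := up3 hχ hp halt (m+1) (m'+1) (by rw [keym m]; omega) a2 (by rw [keym m']; omega) b2
    exact add_right_cancel h
  have hD1 : ∀ m m', 0 < s (m-1) → s m ≤ 0 → 0 < s (m'-1) → s m' ≤ 0 → m = m' := by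
    intro m m' a1 a2 b1 b2
    exact dn1 hχ hp halt m m' (by rw [key m]; omega) a2 (by rw [key m']; omega) b2
  have hD2 : ∀ m q, s m = 0 → s (m+1) < 0 → 0 < s (q-1) → s q ≤ 0 → q = m := by
    intro m q a1 a2 b1 b2
    have h := dn2 hχ hp halt (m+1) q (by rw [keym m]; omega) a2 (by rw [key q]; omega) b2
    rw [h]; ring
  have hD3 : ∀ m m', s m = 0 → s (m+1) < 0 → s m' = 0 → s (m'+1) < 0 → m = m' := by
    intro m m' a1 a2 b1 b2
    have h := dn3 hχ hp halt (m+1) (m'+1) (by rw [keym m]; omega) a2 (by rw [keym m']; omega) b2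
    exact add_right_cancel h
  have hcore := coreCombinatorial hp s hval hzz hU1 hU2 hU3 hD1 hD2 hD3
  have hfun1 : (fun k => if h : k < p then V ⟨k, h⟩ e else 0) =
      (fun k => if h : k < p then s ⟨k, h⟩ else 0) := by
    funext k
    by_cases h : k < p
    · rw [dif_pos h, dif_pos h, hVs ⟨k, h⟩]
    · rw [dif_neg h, dif_neg h]
  have hfun2 : (fun k => if h : k < p then -(V ⟨k, h⟩ e) else 0) =
      (fun k => if h : k < p then -(s ⟨k, h⟩) else 0) := by
    funext k
    by_cases h : k < p
    · rw [dif_pos h, dif_pos h, hVs ⟨k, h⟩]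
    · rw [dif_neg h, dif_neg h]
  rw [hfun1, hfun2]
  exact hcore
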